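/- Let a, b, d be integers with b^2 = d^4 + 200 d^2 a^4 + 3000 a^8. Then a = 0. -/

import Mathlib

-- decide kills
private lemma L16 : ∀ d k l : ZMod 16, d^2 ≠ (2*k)^4 - 100*(2*k)^2*(2*l+1)^2 + 1750*(2*l+1)^4 := by decide
private lemma L8 : ∀ d k l : ZMod 8, d^2 ≠ (2*k+1)^4 - 100*(2*k+1)^2*(2*l+1)^2 + 1750*(2*l+1)^4 := by decide
private lemma L4 : ∀ e k w : ZMod 4, (2*e)^2 ≠ (2*k+1)^4 - 100*(2*k+1)^2*(2*w)^2 + 1750*(2*w)^4 := by decide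
private lemma L3 : ∀ u v : ZMod 3, u^4 - 100*u^2*v^2 + 1750*v^4 = 0 → u = 0 ∧ v = 0 := by decide
private lemma M8_1m : ∀ k s t : ZMod 8, (2*k+1)^2 ≠ -(1*s^4) + 200*s^2*t^2 - 3000*t^4 := by decide
private lemma M8_8p : ∀ k s t : ZMod 8, (2*k+1)^2 ≠ 8*s^4 + 200*s^2*t^2 + 375*t^4 := by decide
private lemma M8_3p : ∀ k s t : ZMod 8, (2*k+1)^2 ≠ 3*s^4 + 200*s^2*t^2 + 1000*t^4 := by decide
private lemma M8_3m : ∀ k s t : ZMod 8, (2*k+1)^2 ≠ -(3*s^4) + 200*s^2*t^2 - 1000*t^4 := by decide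
private lemma M8_24p : ∀ k s t : ZMod 8, (2*k+1)^2 ≠ 24*s^4 + 200*s^2*t^2 + 125*t^4 := by decide
private lemma M8_24m : ∀ k s t : ZMod 8, (2*k+1)^2 ≠ -(24*s^4) + 200*s^2*t^2 - 125*t^4 := by decide
private lemma M5_8m : ∀ u s t : ZMod 5, u ≠ 0 → u^2 ≠ -(8*s^4) + 200*s^2*t^2 - 375*t^4 := by decide


private lemma cop_pow_rightX {D p : ℕ} (hp : p.Prime) (h : ¬ p ∣ D) (k : ℕ) : Nat.Coprime D (p^k) :=
  (Nat.Coprime.pow_right k ((hp.coprime_iff_not_dvd).mpr h).symm)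

private lemma p7 : Nat.Prime 7 := by norm_num

private lemma pin1750 {D : ℕ} (hD : D ∣ 1750) (h5 : 5 ∣ D → 125 ∣ D) :
    D = 1 ∨ D = 2 ∨ D = 7 ∨ D = 14 ∨ D = 125 ∨ D = 250 ∨ D = 875 ∨ D = 1750 := by
  have strip : ∀ {X p k : ℕ}, Nat.Prime p → ¬ p ∣ D → D ∣ X * p^k → D ∣ X :=
    fun hp h hd => (cop_pow_rightX hp h _).dvd_of_dvd_mul_right hd
  by_cases h2 : 2 ∣ D <;> by_cases h5d : 5 ∣ D <;> by_cases h7 : 7 ∣ D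
  · have h125 := h5 h5d
    have h250 : 250 ∣ D := (Nat.Coprime.mul_dvd_of_dvd_of_dvd (by norm_num) h2 h125)
    have h1750 : 1750 ∣ D := by
      have := Nat.Coprime.mul_dvd_of_dvd_of_dvd (show Nat.Coprime 250 7 by norm_num) h250 h7
      norm_num at this; exact this
    exact Or.inr <| Or.inr <| Or.inr <| Or.inr <| Or.inr <| Or.inr <| Or.inr (Nat.dvd_antisymm hD h1750)
  · have h125 := h5 h5d
    have hd250 : D ∣ 250 := strip p7 h7 (show D ∣ 250 * 7^1 by norm_num; exact hD)
    have h250 : 250 ∣ D := (Nat.Coprime.mul_dvd_of_dvd_of_dvd (by norm_num) h2 h125)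
    exact Or.inr <| Or.inr <| Or.inr <| Or.inr <| Or.inr <| Or.inl (Nat.dvd_antisymm hd250 h250)
  · have hd14 : D ∣ 14 := strip Nat.prime_five h5d (show D ∣ 14 * 5^3 by norm_num; exact hD)
    have h14 : 14 ∣ D := (Nat.Coprime.mul_dvd_of_dvd_of_dvd (by norm_num) h2 h7)
    exact Or.inr <| Or.inr <| Or.inr <| Or.inl (Nat.dvd_antisymm hd14 h14)
  · have hd2 : D ∣ 2 := strip Nat.prime_five h5d
      (strip p7 h7 (show D ∣ 2 * 5^3 * 7^1 by norm_num; exact hD))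
    exact Or.inr <| Or.inl (Nat.dvd_antisymm hd2 h2)
  · have h125 := h5 h5d
    have hd875 : D ∣ 875 := strip Nat.prime_two h2 (show D ∣ 875 * 2^1 by norm_num; exact hD)
    have h875 : 875 ∣ D := (Nat.Coprime.mul_dvd_of_dvd_of_dvd (show Nat.Coprime 125 7 by norm_num) h125 h7)
    exact Or.inr <| Or.inr <| Or.inr <| Or.inr <| Or.inr <| Or.inr <| Or.inl (Nat.dvd_antisymm hd875 h875)
  · have h125 := h5 h5d
    have hd125 : D ∣ 125 := strip p7 h7
      (strip Nat.prime_two h2 (show D ∣ 125 * 7^1 * 2^1 by norm_num; exact hD))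
    exact Or.inr <| Or.inr <| Or.inr <| Or.inr <| Or.inl (Nat.dvd_antisymm hd125 h125)
  · have hd7 : D ∣ 7 := strip Nat.prime_five h5d
      (strip Nat.prime_two h2 (show D ∣ 7 * 5^3 * 2^1 by norm_num; exact hD))
    exact Or.inr <| Or.inr <| Or.inl (Nat.dvd_antisymm hd7 h7)
  · have hd1 : D ∣ 1 := strip p7 h7 (strip Nat.prime_five h5d
      (strip Nat.prime_two h2 (show D ∣ 1 * 7^1 * 5^3 * 2^1 by norm_num; exact hD)))
    exact Or.inl (Nat.eq_one_of_dvd_one hd1)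

private lemma pin3000 {D : ℕ} (hD : D ∣ 3000) (h2 : 2 ∣ D → 8 ∣ D) (h5 : 5 ∣ D → 125 ∣ D) :
    D = 1 ∨ D = 3 ∨ D = 8 ∨ D = 24 ∨ D = 125 ∨ D = 375 ∨ D = 1000 ∨ D = 3000 := by
  have strip : ∀ {X p k : ℕ}, Nat.Prime p → ¬ p ∣ D → D ∣ X * p^k → D ∣ X :=
    fun hp h hd => (cop_pow_rightX hp h _).dvd_of_dvd_mul_right hd
  by_cases h2d : 2 ∣ D <;> by_cases h3d : 3 ∣ D <;> by_cases h5d : 5 ∣ D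
  · have h8 := h2 h2d; have h125 := h5 h5d
    have h24 : 24 ∣ D := Nat.Coprime.mul_dvd_of_dvd_of_dvd (by norm_num) h8 h3d
    have h3000 : 3000 ∣ D := by
      have := Nat.Coprime.mul_dvd_of_dvd_of_dvd (show Nat.Coprime 24 125 by norm_num) h24 h125
      norm_num at this; exact this
    exact Or.inr <| Or.inr <| Or.inr <| Or.inr <| Or.inr <| Or.inr <| Or.inr (Nat.dvd_antisymm hD h3000)
  · have h8 := h2 h2d
    have hd24 : D ∣ 24 := strip Nat.prime_five h5d (show D ∣ 24 * 5^3 by norm_num; exact hD)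
    have h24 : 24 ∣ D := Nat.Coprime.mul_dvd_of_dvd_of_dvd (by norm_num) h8 h3d
    exact Or.inr <| Or.inr <| Or.inr <| Or.inl (Nat.dvd_antisymm hd24 h24)
  · have h8 := h2 h2d; have h125 := h5 h5d
    have hd1000 : D ∣ 1000 := strip Nat.prime_three h3d (show D ∣ 1000 * 3^1 by norm_num; exact hD)
    have h1000 : 1000 ∣ D := by
      have := Nat.Coprime.mul_dvd_of_dvd_of_dvd (show Nat.Coprime 8 125 by norm_num) h8 h125
      norm_num at this; exact this
    exact Or.inr <| Or.inr <| Or.inr <| Or.inr <| Or.inr <| Or.inr <| Or.inl (Nat.dvd_antisymm hd1000 h1000)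
  · have h8 := h2 h2d
    have hd8 : D ∣ 8 := strip Nat.prime_five h5d
      (strip Nat.prime_three h3d (show D ∣ 8 * 5^3 * 3^1 by norm_num; exact hD))
    exact Or.inr <| Or.inr <| Or.inl (Nat.dvd_antisymm (by norm_num at hd8 ⊢; exact hd8) h8)
  · have h125 := h5 h5d
    have hd375 : D ∣ 375 := strip Nat.prime_two h2d (show D ∣ 375 * 2^3 by norm_num; exact hD)
    have h375 : 375 ∣ D := Nat.Coprime.mul_dvd_of_dvd_of_dvd (show Nat.Coprime 3 125 by norm_num) h3d h125
    exact Or.inr <| Or.inr <| Or.inr <| Or.inr <| Or.inr <| Or.inl (Nat.dvd_antisymm hd375 h375)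
  · have hd3 : D ∣ 3 := strip Nat.prime_five h5d
      (strip Nat.prime_two h2d (show D ∣ 3 * 5^3 * 2^3 by norm_num; exact hD))
    exact Or.inr <| Or.inl (Nat.dvd_antisymm hd3 h3d)
  · have h125 := h5 h5d
    have hd125 : D ∣ 125 := strip Nat.prime_three h3d
      (strip Nat.prime_two h2d (show D ∣ 125 * 3^1 * 2^3 by norm_num; exact hD))
    exact Or.inr <| Or.inr <| Or.inr <| Or.inr <| Or.inl (Nat.dvd_antisymm hd125 h125)
  · have hd1 : D ∣ 1 := strip Nat.prime_five h5d (strip Nat.prime_three h3d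
      (strip Nat.prime_two h2d (show D ∣ 1 * 5^3 * 3^1 * 2^3 by norm_num; exact hD)))
    exact Or.inl (Nat.eq_one_of_dvd_one hd1)

private lemma cop_pow_right' {D p : ℕ} (hp : p.Prime) (h : ¬ p ∣ D) (k : ℕ) : Nat.Coprime D (p^k) :=
  (Nat.Coprime.pow_right k ((hp.coprime_iff_not_dvd).mpr h).symm)

private lemma split4 {C m n A : ℕ} (hC : 0 < C) (hcop : Nat.Coprime m n)
    (h : m * n = C * A^4) :
    ∃ u v : ℕ, Nat.gcd C m * Nat.gcd C n = C ∧ m = Nat.gcd C m * u^4 ∧ n = Nat.gcd C n * v^4 ∧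
      u * v = A := by
  have hdvd : C ∣ m * n := h ▸ Dvd.intro _ rfl
  have hDD : Nat.gcd C m * Nat.gcd C n = C :=
    (Nat.gcd_mul_gcd_eq_iff_dvd_mul_of_coprime hcop).mpr hdvd
  obtain ⟨m₁, hm₁⟩ := Nat.gcd_dvd_right C m
  obtain ⟨n₁, hn₁⟩ := Nat.gcd_dvd_right C n
  have hprod : m₁ * n₁ = A ^ 4 := by
    have : C * (m₁ * n₁) = C * A ^ 4 := by
      calc C * (m₁ * n₁) = (Nat.gcd C m * m₁) * (Nat.gcd C n * n₁) := by
              rw [show (Nat.gcd C m * m₁) * (Nat.gcd C n * n₁)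
                  = (Nat.gcd C m * Nat.gcd C n) * (m₁ * n₁) from by ring, hDD]
        _ = m * n := by rw [← hm₁, ← hn₁]
        _ = C * A ^ 4 := h
    exact Nat.eq_of_mul_eq_mul_left hC this
  have hcop₁ : Nat.Coprime m₁ n₁ :=
    Nat.Coprime.coprime_dvd_left (Dvd.intro_left _ hm₁.symm)
      (Nat.Coprime.coprime_dvd_right (Dvd.intro_left _ hn₁.symm) hcop)
  obtain ⟨u, hu⟩ := exists_eq_pow_of_mul_eq_pow (α := ℕ)
    (isUnit_of_dvd_one (by rw [← hcop₁]; exact dvd_gcd (gcd_dvd_left _ _) (gcd_dvd_right _ _))) hprod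
  obtain ⟨v, hv⟩ := exists_eq_pow_of_mul_eq_pow (α := ℕ)
    (isUnit_of_dvd_one (by rw [← hcop₁.symm]; exact dvd_gcd (gcd_dvd_left _ _) (gcd_dvd_right _ _)))
    (by rw [mul_comm] at hprod; exact hprod)
  refine ⟨u, v, hDD, hm₁.trans (by rw [hu]), hn₁.trans (by rw [hv]), ?_⟩
  have : (u * v) ^ 4 = A ^ 4 := by rw [mul_pow, ← hu, ← hv, hprod]
  exact Nat.pow_left_injective (by norm_num) this

private lemma isunit_contra {p : ℕ} (hp : p.Prime) (h : IsUnit (p:ℤ)) : False := by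
  have hlt := hp.one_lt
  rcases Int.isUnit_iff.mp h with h1 | h1 <;>
    [ (have : p = 1 := by exact_mod_cast h1; done) ; (have : (0:ℤ) ≤ (p:ℤ) := Int.natCast_nonneg p)] <;>
    omega

lemma stage2 {u v d : ℤ} (hcop : IsCoprime u v) (hv : v ≠ 0)
    (h : d ^ 2 = u ^ 4 - 100 * u ^ 2 * v ^ 2 + 1750 * v ^ 4) :
    ∃ b' d' t : ℤ, t ≠ 0 ∧ 2 * t.natAbs ≤ v.natAbs ∧
      b' ^ 2 = d' ^ 4 + 200 * d' ^ 2 * t ^ 2 + 3000 * t ^ 4 := by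
  have hunit : ∀ p : ℕ, p.Prime → (p:ℤ) ∣ u → (p:ℤ) ∣ v → False := fun p hp h1 h2 =>
    isunit_contra hp (hcop.isUnit_of_dvd' h1 h2)
  -- u odd
  have hu : Odd u := by
    by_contra hne
    obtain ⟨k, hk⟩ := Int.not_odd_iff_even.mp hne
    have hk2 : u = 2 * k := by omega
    have hvo : Odd v := by
      by_contra hvne
      obtain ⟨l, hl⟩ := Int.not_odd_iff_even.mp hvne
      exact hunit 2 Nat.prime_two ⟨k, hk2⟩ ⟨l, by omega⟩
    obtain ⟨l, hl⟩ := hvo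
    rw [hk2, hl] at h
    have h16 := congrArg (Int.cast : ℤ → ZMod 16) h
    push_cast at h16
    exact L16 _ _ _ h16
  obtain ⟨k0, hk0⟩ := hu
  have hk0' : u = 2 * k0 + 1 := hk0
  -- v even
  have hve : ∃ w, v = 2 * w := by
    by_contra hne
    have hvo : Odd v := by
      rcases Int.even_or_odd v with he | ho
      · obtain ⟨w, hw⟩ := he; exact absurd ⟨w, by omega⟩ hne
      · exact ho
    obtain ⟨l, hl⟩ := hvo
    rw [hk0', hl] at h
    have h8 := congrArg (Int.cast : ℤ → ZMod 8) h
    push_cast at h8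
    exact L8 _ _ _ h8
  obtain ⟨w, hw⟩ := hve
  -- d odd
  have hd : Odd d := by
    by_contra hne
    obtain ⟨e, he⟩ := Int.not_odd_iff_even.mp hne
    rw [hk0', hw] at h
    have he2 : d = 2 * e := by omega
    rw [he2] at h
    have h4 := congrArg (Int.cast : ℤ → ZMod 4) h
    push_cast at h4
    exact L4 _ _ _ h4
  -- 5 ∤ u
  have hp5 : Prime (5:ℤ) := by norm_num
  have h5u : ¬ (5:ℤ) ∣ u := by
    intro h5
    obtain ⟨u₁, hu₁⟩ := h5
    have h5d : (5:ℤ) ∣ d := hp5.dvd_of_dvd_pow (n := 2)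
      ⟨125*u₁^4 - 500*u₁^2*v^2 + 350*v^4, by rw [h, hu₁]; ring⟩
    obtain ⟨d₁, hd₁⟩ := h5d
    have h1 : d₁^2 = 25*u₁^4 - 100*u₁^2*v^2 + 70*v^4 := by
      have e : (25:ℤ) * d₁^2 = 25 * (25*u₁^4 - 100*u₁^2*v^2 + 70*v^4) := by
        rw [hu₁, hd₁] at h; linear_combination h
      exact mul_left_cancel₀ (by norm_num) e
    have h5d₁ : (5:ℤ) ∣ d₁ := hp5.dvd_of_dvd_pow (n := 2)
      ⟨5*u₁^4 - 20*u₁^2*v^2 + 14*v^4, by rw [h1]; ring⟩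
    obtain ⟨d₂, hd₂⟩ := h5d₁
    have h2 : (5:ℤ) ∣ 14 * v^4 := by
      refine ⟨d₂^2 - u₁^4 + 4*u₁^2*v^2, ?_⟩
      rw [hd₂] at h1
      have e5 : (5:ℤ) * (14*v^4) = 5 * (5 * (d₂^2 - u₁^4 + 4*u₁^2*v^2)) := by linear_combination -h1
      exact mul_left_cancel₀ (by norm_num) e5
    have h5v : (5:ℤ) ∣ v :=
      hp5.dvd_of_dvd_pow (n := 4) ((hp5.dvd_mul.mp h2).resolve_left (by norm_num))
    exact hunit 5 (by norm_num) ⟨u₁, hu₁⟩ h5v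
  -- 5 ∤ d
  have h5d : ¬ (5:ℤ) ∣ d := by
    intro h5
    apply h5u
    apply hp5.dvd_of_dvd_pow (n := 4)
    have : u^4 = d^2 + 100*u^2*v^2 - 1750*v^4 := by linear_combination -h
    obtain ⟨e, he⟩ := h5
    exact ⟨5*e^2 + 20*u^2*v^2 - 350*v^4, by rw [this, he]; ring⟩
  -- 3 ∤ d
  have h3d : ¬ (3:ℤ) ∣ d := by
    intro h3
    obtain ⟨e, he⟩ := h3
    have h3' := congrArg (Int.cast : ℤ → ZMod 3) h
    push_cast at h3'
    rw [he] at h3'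
    push_cast at h3'
    have : ((u:ZMod 3))^4 - 100*(u:ZMod 3)^2*(v:ZMod 3)^2 + 1750*(v:ZMod 3)^4 = 0 := by
      rw [← h3', show ((3:ZMod 3)) = 0 by decide]; ring
    obtain ⟨hu3, hv3⟩ := L3 _ _ this
    exact hunit 3 (by norm_num) ((ZMod.intCast_zmod_eq_zero_iff_dvd u 3).mp hu3)
      ((ZMod.intCast_zmod_eq_zero_iff_dvd v 3).mp hv3)
  -- set up Z
  obtain ⟨Z, hZ0, hZc⟩ : ∃ Z : ℤ, 0 ≤ Z ∧ (u^2 - 50*v^2 = Z ∨ u^2 - 50*v^2 = -Z) := by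
    rcases le_or_gt 0 (u^2 - 50*v^2) with hle | hlt
    · exact ⟨u^2 - 50*v^2, hle, Or.inl rfl⟩
    · exact ⟨-(u^2 - 50*v^2), by linarith, Or.inr (by ring)⟩
  have hZsq : Z^2 = d^2 + 750*v^4 := by
    rcases hZc with hc | hc
    · rw [← hc]; linear_combination -h
    · have : Z = -(u^2 - 50*v^2) := by linarith
      rw [this]; linear_combination -h
  have hZodd : Odd Z := by
    rcases hZc with hc | hc
    · exact ⟨2*k0^2 + 2*k0 - 25*v^2, by rw [← hc, hk0']; ring⟩
    · exact ⟨-(2*k0^2 + 2*k0 - 25*v^2) - 1, by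
        have : Z = -(u^2 - 50*v^2) := by linarith
        rw [this, hk0']; ring⟩
  set d₀ : ℤ := |d| with hd₀
  have hd₀0 : 0 ≤ d₀ := abs_nonneg d
  have hd₀sq : d₀^2 = d^2 := sq_abs d
  have hd₀odd : Odd d₀ := by
    rcases abs_choice d with hc | hc
    · rw [hd₀, hc]; exact hd
    · rw [hd₀, hc]; obtain ⟨c, hcc⟩ := hd; exact ⟨-c-1, by omega⟩
  have hvpos : 0 < v^4 := by positivity
  have hZd : d₀ < Z := by
    have h1 : d₀^2 < Z^2 := by rw [hd₀sq, hZsq]; linarith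
    exact lt_of_pow_lt_pow_left₀ 2 hZ0 h1
  obtain ⟨m', hm'⟩ : ∃ m', Z - d₀ = 2 * m' := by
    obtain ⟨a, ha⟩ := hZodd; obtain ⟨b, hb⟩ := hd₀odd; exact ⟨a - b, by omega⟩
  obtain ⟨n', hn'⟩ : ∃ n', Z + d₀ = 2 * n' := by
    obtain ⟨a, ha⟩ := hZodd; obtain ⟨b, hb⟩ := hd₀odd; exact ⟨a + b + 1, by omega⟩
  have hm'pos : 0 < m' := by omega
  have hn'pos : 0 < n' := by omega
  have hZsum : Z = m' + n' := by omega
  have hd₀diff : d₀ = n' - m' := by omega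
  have hmn : m' * n' = 3000 * w^4 := by
    have e : (4:ℤ) * (m' * n') = 4 * (3000 * w^4) := by
      have : (2*m') * (2*n') = Z^2 - d₀^2 := by rw [← hm', ← hn']; ring
      rw [hd₀sq, hZsq] at this
      rw [hw] at this
      linear_combination this
    exact mul_left_cancel₀ (by norm_num) e
  -- coprimality of m', n'
  have hgcd : Nat.Coprime m'.natAbs n'.natAbs := by
    by_contra hne
    obtain ⟨p, hp, hpm, hpn⟩ := Nat.Prime.not_coprime_iff_dvd.mp hne
    have hpm' : (p:ℤ) ∣ m' := Int.dvd_natAbs.mp (Int.natCast_dvd_natCast.mpr hpm)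
    have hpn' : (p:ℤ) ∣ n' := Int.dvd_natAbs.mp (Int.natCast_dvd_natCast.mpr hpn)
    have hpZ : (p:ℤ) ∣ Z := hZsum ▸ dvd_add hpm' hpn'
    have hpd : (p:ℤ) ∣ d := by
      have hpd₀ : (p:ℤ) ∣ d₀ := hd₀diff ▸ dvd_sub hpn' hpm'
      rcases abs_choice d with hc | hc
      · rwa [hd₀, hc] at hpd₀
      · rw [hd₀, hc] at hpd₀; exact (dvd_neg).mp hpd₀
    have hp2 : p ≠ 2 := by
      rintro rfl
      obtain ⟨c, hc⟩ := hZodd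
      obtain ⟨e, he⟩ := hpZ
      omega
    have hpP : Prime (p:ℤ) := Nat.prime_iff_prime_int.mp hp
    have hpmn : (p:ℤ) ∣ 3000 * w^4 := hmn ▸ Dvd.dvd.mul_right hpm' n'
    rcases hpP.dvd_mul.mp hpmn with hc | hc
    · -- p ∣ 3000
      have hpn3000 : p ∣ 3000 := by exact_mod_cast hc
      have h8 : (3000 : ℕ) = 2^3 * (3 * 5^3) := by norm_num
      rcases (Nat.Prime.dvd_mul hp).mp (h8 ▸ hpn3000) with hc2 | hc2
      · exact hp2 ((Nat.prime_dvd_prime_iff_eq hp Nat.prime_two).mp (hp.dvd_of_dvd_pow hc2))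
      · rcases (Nat.Prime.dvd_mul hp).mp hc2 with hc3 | hc3
        · have : p = 3 := (Nat.prime_dvd_prime_iff_eq hp Nat.prime_three).mp hc3
          rw [this] at hpd; exact h3d (by exact_mod_cast hpd)
        · have : p = 5 := (Nat.prime_dvd_prime_iff_eq hp Nat.prime_five).mp (hp.dvd_of_dvd_pow hc3)
          rw [this] at hpd; exact h5d (by exact_mod_cast hpd)
    · -- p ∣ w
      have hpw : (p:ℤ) ∣ w := hpP.dvd_of_dvd_pow hc
      have hpv : (p:ℤ) ∣ v := hw ▸ Dvd.dvd.mul_left hpw 2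
      have hpY : (p:ℤ) ∣ u^2 - 50*v^2 := by
        rcases hZc with hc2 | hc2
        · rw [hc2]; exact hpZ
        · rw [hc2]; exact hpZ.neg_right
      have hpu : (p:ℤ) ∣ u := hpP.dvd_of_dvd_pow (n := 2)
        (by obtain ⟨a, ha⟩ := hpY; obtain ⟨b, hb⟩ := hpv
            exact ⟨a + 50*b*v, by rw [show u^2 = (u^2 - 50*v^2) + 50*(v*v) from by ring, ha]
                                  nth_rewrite 2 [hb]; ring⟩)
      exact hunit p hp hpu hpv
  -- split into fourth powers
  have hmnN : m'.natAbs * n'.natAbs = 3000 * w.natAbs^4 := by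
    have := congrArg Int.natAbs hmn
    rwa [Int.natAbs_mul, Int.natAbs_mul, Int.natAbs_pow] at this
  obtain ⟨s', t', hEE, hmE, hnE, hst⟩ := split4 (by norm_num) hgcd hmnN
  set E1 := Nat.gcd 3000 m'.natAbs with hE1def
  set E2 := Nat.gcd 3000 n'.natAbs with hE2def
  -- conditions for pinning E1
  have hcopE : ∀ {x y : ℤ} {q : ℕ} {k : ℕ}, q.Prime → 0 < x → 0 < y →
      Nat.Coprime x.natAbs y.natAbs → x.natAbs * y.natAbs = 3000 * w.natAbs^4 →
      q ∣ Nat.gcd 3000 x.natAbs → q^k ∣ 3000 → q^k ∣ Nat.gcd 3000 x.natAbs := by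
    intro x y q k hq hx hy hco hxy hqd hqk
    have hqm : q ∣ x.natAbs := hqd.trans (Nat.gcd_dvd_right _ _)
    have hqn : ¬ q ∣ y.natAbs := by
      intro hc
      have := Nat.dvd_gcd hqm hc
      rw [hco] at this
      exact hq.one_lt.ne' (Nat.eq_one_of_dvd_one this)
    have hdvd : q^k ∣ x.natAbs * y.natAbs := by
      rw [hxy]; exact hqk.trans ⟨w.natAbs^4, rfl⟩
    have hqkm : q^k ∣ x.natAbs :=
      ((cop_pow_right' hq hqn k).symm).dvd_of_dvd_mul_right hdvd
    exact Nat.dvd_gcd hqk hqkm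
  have hE1dvd : E1 ∣ 3000 := Nat.gcd_dvd_left _ _
  have hE1pin := pin3000 hE1dvd
    (fun h2 => by
      have := hcopE Nat.prime_two hm'pos hn'pos hgcd hmnN (k := 3) h2 (by norm_num)
      simpa using this)
    (fun h5 => by
      have := hcopE Nat.prime_five hm'pos hn'pos hgcd hmnN (k := 3) h5 (by norm_num)
      simpa using this)
  -- move to ℤ
  have hmabs : (m'.natAbs : ℤ) = m' := Int.natAbs_of_nonneg hm'pos.le
  have hnabs : (n'.natAbs : ℤ) = n' := Int.natAbs_of_nonneg hn'pos.le
  have hmZ : m' = (E1 : ℤ) * (s' : ℤ)^4 := by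
    rw [← hmabs, hmE]; push_cast; ring
  have hnZ : n' = (E2 : ℤ) * (t' : ℤ)^4 := by
    rw [← hnabs, hnE]; push_cast; ring
  have hw2 : w^2 = (s' : ℤ)^2 * (t' : ℤ)^2 := by
    have h1 : ((s' * t' : ℕ) : ℤ)^2 = ((w.natAbs : ℕ) : ℤ)^2 := by rw [hst]
    have h2 : ((w.natAbs : ℕ) : ℤ)^2 = w^2 := by
      push_cast [Int.natAbs_sq]
      simp [sq_abs]
    push_cast at h1
    rw [← h2]; push_cast; linear_combination -h1
  have hs'pos : 0 < s' := by
    rcases Nat.eq_zero_or_pos s' with h0 | h0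
    · exfalso
      have : m'.natAbs = 0 := by rw [hmE, h0]; ring
      have := hmabs
      rw [this] at hmabs
      simp at hmabs
      omega
    · exact h0
  have ht'pos : 0 < t' := by
    rcases Nat.eq_zero_or_pos t' with h0 | h0
    · exfalso
      have : n'.natAbs = 0 := by rw [hnE, h0]; ring
      rw [this] at hnabs
      simp at hnabs
      omega
    · exact h0
  have hvabs : v.natAbs = 2 * (s' * t') := by
    rw [hw, hst]
    rw [Int.natAbs_mul]
    rfl
  have hu5' : ((u : ZMod 5)) ≠ 0 := fun hc =>
    h5u ((ZMod.intCast_zmod_eq_zero_iff_dvd u 5).mp hc)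
  -- final case analysis
  rcases hZc with hcZ | hcZ
  · -- positive: u^2 = E1 s^4 + 200 s^2 t^2 + E2 t^4
    have hu2 : u^2 = m' + n' + 200*w^2 := by
      rw [hw] at hcZ
      linear_combination hcZ + hZsum
    rcases hE1pin with hE | hE | hE | hE | hE | hE | hE | hE <;> rw [hE] at hEE
    · -- E1 = 1, E2 = 3000 : descent output
      have hE2v : E2 = 3000 := by omega
      rw [hE] at hmZ; rw [hE2v] at hnZ; push_cast at hmZ hnZ
      refine ⟨u, (s' : ℤ), (t' : ℤ), ?_, ?_, ?_⟩
      · exact Int.natCast_ne_zero.mpr (by omega)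
      · rw [Int.natAbs_natCast, hvabs]
        have : t' ≤ s' * t' := Nat.le_mul_of_pos_left t' hs'pos
        omega
      · linear_combination hu2 + hmZ + hnZ + 200*hw2
    · -- E1 = 3
      exfalso
      have hE2v : E2 = 1000 := by omega
      rw [hE] at hmZ; rw [hE2v] at hnZ; push_cast at hmZ hnZ
      have heq : u^2 = 3*(s':ℤ)^4 + 200*(s':ℤ)^2*(t':ℤ)^2 + 1000*(t':ℤ)^4 := by
        linear_combination hu2 + hmZ + hnZ + 200*hw2
      rw [hk0'] at heq
      have h8 := congrArg (Int.cast : ℤ → ZMod 8) heq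
      push_cast at h8
      exact M8_3p _ _ _ h8
    · -- E1 = 8
      exfalso
      have hE2v : E2 = 375 := by omega
      rw [hE] at hmZ; rw [hE2v] at hnZ; push_cast at hmZ hnZ
      have heq : u^2 = 8*(s':ℤ)^4 + 200*(s':ℤ)^2*(t':ℤ)^2 + 375*(t':ℤ)^4 := by
        linear_combination hu2 + hmZ + hnZ + 200*hw2
      rw [hk0'] at heq
      have h8 := congrArg (Int.cast : ℤ → ZMod 8) heq
      push_cast at h8
      exact M8_8p _ _ _ h8
    · -- E1 = 24
      exfalso
      have hE2v : E2 = 125 := by omega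
      rw [hE] at hmZ; rw [hE2v] at hnZ; push_cast at hmZ hnZ
      have heq : u^2 = 24*(s':ℤ)^4 + 200*(s':ℤ)^2*(t':ℤ)^2 + 125*(t':ℤ)^4 := by
        linear_combination hu2 + hmZ + hnZ + 200*hw2
      rw [hk0'] at heq
      have h8 := congrArg (Int.cast : ℤ → ZMod 8) heq
      push_cast at h8
      exact M8_24p _ _ _ h8
    · -- E1 = 125
      exfalso
      have hE2v : E2 = 24 := by omega
      rw [hE] at hmZ; rw [hE2v] at hnZ; push_cast at hmZ hnZ
      have heq : u^2 = 125*(s':ℤ)^4 + 200*(s':ℤ)^2*(t':ℤ)^2 + 24*(t':ℤ)^4 := by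
        linear_combination hu2 + hmZ + hnZ + 200*hw2
      rw [hk0'] at heq
      have h8 := congrArg (Int.cast : ℤ → ZMod 8) heq
      push_cast at h8
      exact M8_24p (k0:ZMod 8) (t':ZMod 8) (s':ZMod 8) (by linear_combination h8)
    · -- E1 = 375
      exfalso
      have hE2v : E2 = 8 := by omega
      rw [hE] at hmZ; rw [hE2v] at hnZ; push_cast at hmZ hnZ
      have heq : u^2 = 375*(s':ℤ)^4 + 200*(s':ℤ)^2*(t':ℤ)^2 + 8*(t':ℤ)^4 := by
        linear_combination hu2 + hmZ + hnZ + 200*hw2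
      rw [hk0'] at heq
      have h8 := congrArg (Int.cast : ℤ → ZMod 8) heq
      push_cast at h8
      exact M8_8p (k0:ZMod 8) (t':ZMod 8) (s':ZMod 8) (by linear_combination h8)
    · -- E1 = 1000
      exfalso
      have hE2v : E2 = 3 := by omega
      rw [hE] at hmZ; rw [hE2v] at hnZ; push_cast at hmZ hnZ
      have heq : u^2 = 1000*(s':ℤ)^4 + 200*(s':ℤ)^2*(t':ℤ)^2 + 3*(t':ℤ)^4 := by
        linear_combination hu2 + hmZ + hnZ + 200*hw2
      rw [hk0'] at heq
      have h8 := congrArg (Int.cast : ℤ → ZMod 8) heq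
      push_cast at h8
      exact M8_3p (k0:ZMod 8) (t':ZMod 8) (s':ZMod 8) (by linear_combination h8)
    · -- E1 = 3000, E2 = 1 : descent output (swapped)
      have hE2v : E2 = 1 := by omega
      rw [hE] at hmZ; rw [hE2v] at hnZ; push_cast at hmZ hnZ
      refine ⟨u, (t' : ℤ), (s' : ℤ), ?_, ?_, ?_⟩
      · exact Int.natCast_ne_zero.mpr (by omega)
      · rw [Int.natAbs_natCast, hvabs]
        have : s' ≤ s' * t' := Nat.le_mul_of_pos_right s' ht'pos
        omega
      · linear_combination hu2 + hmZ + hnZ + 200*hw2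
  · -- negative: u^2 = -(E1 s^4) + 200 s^2 t^2 - E2 t^4
    exfalso
    have hu2 : u^2 = -(m' + n') + 200*w^2 := by
      rw [hw] at hcZ
      linear_combination hcZ - hZsum
    rcases hE1pin with hE | hE | hE | hE | hE | hE | hE | hE <;> rw [hE] at hEE <;>
      [ (have hE2v : E2 = 3000 := by omega);
        (have hE2v : E2 = 1000 := by omega);
        (have hE2v : E2 = 375 := by omega);
        (have hE2v : E2 = 125 := by omega);
        (have hE2v : E2 = 24 := by omega);
        (have hE2v : E2 = 8 := by omega);
        (have hE2v : E2 = 3 := by omega);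
        (have hE2v : E2 = 1 := by omega)] <;>
      rw [hE] at hmZ <;> rw [hE2v] at hnZ <;> push_cast at hmZ hnZ
    · -- (1,3000,-)
      have heq : u^2 = -(1*(s':ℤ)^4) + 200*(s':ℤ)^2*(t':ℤ)^2 - 3000*(t':ℤ)^4 := by
        linear_combination hu2 - hmZ - hnZ + 200*hw2
      rw [hk0'] at heq
      have h8 := congrArg (Int.cast : ℤ → ZMod 8) heq
      push_cast at h8
      exact M8_1m (k0:ZMod 8) (s':ZMod 8) (t':ZMod 8) (by linear_combination h8)
    · -- (3,1000,-)
      have heq : u^2 = -(3*(s':ℤ)^4) + 200*(s':ℤ)^2*(t':ℤ)^2 - 1000*(t':ℤ)^4 := by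
        linear_combination hu2 - hmZ - hnZ + 200*hw2
      rw [hk0'] at heq
      have h8 := congrArg (Int.cast : ℤ → ZMod 8) heq
      push_cast at h8
      exact M8_3m (k0:ZMod 8) (s':ZMod 8) (t':ZMod 8) (by linear_combination h8)
    · -- (8,375,-) : mod 5
      have heq : u^2 = -(8*(s':ℤ)^4) + 200*(s':ℤ)^2*(t':ℤ)^2 - 375*(t':ℤ)^4 := by
        linear_combination hu2 - hmZ - hnZ + 200*hw2
      have h5 := congrArg (Int.cast : ℤ → ZMod 5) heq
      push_cast at h5
      exact M5_8m ((u:ZMod 5)) ((s':ZMod 5)) ((t':ZMod 5)) hu5' (by linear_combination h5)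
    · -- (24,125,-)
      have heq : u^2 = -(24*(s':ℤ)^4) + 200*(s':ℤ)^2*(t':ℤ)^2 - 125*(t':ℤ)^4 := by
        linear_combination hu2 - hmZ - hnZ + 200*hw2
      rw [hk0'] at heq
      have h8 := congrArg (Int.cast : ℤ → ZMod 8) heq
      push_cast at h8
      exact M8_24m (k0:ZMod 8) (s':ZMod 8) (t':ZMod 8) (by linear_combination h8)
    · -- (125,24,-)
      have heq : u^2 = -(125*(s':ℤ)^4) + 200*(s':ℤ)^2*(t':ℤ)^2 - 24*(t':ℤ)^4 := by
        linear_combination hu2 - hmZ - hnZ + 200*hw2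
      rw [hk0'] at heq
      have h8 := congrArg (Int.cast : ℤ → ZMod 8) heq
      push_cast at h8
      exact M8_24m (k0:ZMod 8) (t':ZMod 8) (s':ZMod 8) (by linear_combination h8)
    · -- (375,8,-)
      have heq : u^2 = -(375*(s':ℤ)^4) + 200*(s':ℤ)^2*(t':ℤ)^2 - 8*(t':ℤ)^4 := by
        linear_combination hu2 - hmZ - hnZ + 200*hw2
      have h5 := congrArg (Int.cast : ℤ → ZMod 5) heq
      push_cast at h5
      exact M5_8m ((u:ZMod 5)) ((t':ZMod 5)) ((s':ZMod 5)) hu5' (by linear_combination h5)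
    · -- (1000,3,-)
      have heq : u^2 = -(1000*(s':ℤ)^4) + 200*(s':ℤ)^2*(t':ℤ)^2 - 3*(t':ℤ)^4 := by
        linear_combination hu2 - hmZ - hnZ + 200*hw2
      rw [hk0'] at heq
      have h8 := congrArg (Int.cast : ℤ → ZMod 8) heq
      push_cast at h8
      exact M8_3m (k0:ZMod 8) (t':ZMod 8) (s':ZMod 8) (by linear_combination h8)
    · -- (3000,1,-)
      have heq : u^2 = -(3000*(s':ℤ)^4) + 200*(s':ℤ)^2*(t':ℤ)^2 - 1*(t':ℤ)^4 := by
        linear_combination hu2 - hmZ - hnZ + 200*hw2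
      rw [hk0'] at heq
      have h8 := congrArg (Int.cast : ℤ → ZMod 8) heq
      push_cast at h8
      exact M8_1m (k0:ZMod 8) (t':ZMod 8) (s':ZMod 8) (by linear_combination h8)
-- stage 1 decide lemmas
private lemma K16a : ∀ b k l : ZMod 16, b^2 ≠ (2*k)^4 + 200*(2*k)^2*(2*l+1)^2 + 3000*(2*l+1)^4 := by decide
private lemma K4b : ∀ e k A : ZMod 4, (2*e)^2 ≠ (2*k+1)^4 + 200*(2*k+1)^2*A^2 + 3000*A^4 := by decide
private lemma K8_7 : ∀ d k v : ZMod 8, d^2 ≠ 7*(2*k+1)^4 - 100*(2*k+1)^2*v^2 + 250*v^4 := by decide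
private lemma K8_250 : ∀ d k v : ZMod 8, d^2 ≠ 250*(2*k+1)^4 - 100*(2*k+1)^2*v^2 + 7*v^4 := by decide
private lemma K8_14 : ∀ d k v : ZMod 8, d^2 ≠ 14*(2*k+1)^4 - 100*(2*k+1)^2*v^2 + 125*v^4 := by decide
private lemma K8_125 : ∀ d k v : ZMod 8, d^2 ≠ 125*(2*k+1)^4 - 100*(2*k+1)^2*v^2 + 14*v^4 := by decide
private lemma K5_2 : ∀ d u v : ZMod 5, d ≠ 0 → d^2 ≠ 2*u^4 - 100*u^2*v^2 + 875*v^4 := by decide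

private lemma master : ∀ N : ℕ, ∀ A b d : ℤ, A.natAbs = N →
    b^2 = d^4 + 200*d^2*A^2 + 3000*A^4 → A = 0 := by
  intro N
  induction N using Nat.strong_induction_on with
  | _ N IH =>
  intro A b d hN heq
  by_contra hA0
  by_cases hg1 : Int.gcd d A = 1
  case neg =>
    -- reduce by common factor
    have hgne : Int.gcd d A ≠ 0 := fun hc => hA0 (Int.natAbs_eq_zero.mp (Nat.eq_zero_of_gcd_eq_zero_right hc))
    set g : ℕ := Int.gcd d A with hgdef
    have hg2 : 2 ≤ g := by omega
    obtain ⟨d₁, hd₁⟩ : ((g:ℤ)) ∣ d := Int.gcd_dvd_left d A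
    obtain ⟨A₁, hA₁⟩ : ((g:ℤ)) ∣ A := Int.gcd_dvd_right d A
    have hbdvd : ((g:ℤ)^2)^2 ∣ b^2 := by
      refine ⟨d₁^4 + 200*d₁^2*A₁^2 + 3000*A₁^4, ?_⟩
      rw [heq, hd₁, hA₁]; ring
    have hb2 : ((g:ℤ)^2) ∣ b := (Int.pow_dvd_pow_iff two_ne_zero).mp hbdvd
    obtain ⟨b₁, hb₁⟩ := hb2
    have hgz : ((g:ℤ)) ≠ 0 := Int.natCast_ne_zero.mpr (by omega)
    have heq₁ : b₁^2 = d₁^4 + 200*d₁^2*A₁^2 + 3000*A₁^4 := by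
      have e : (g:ℤ)^4 * (b₁^2) = (g:ℤ)^4 * (d₁^4 + 200*d₁^2*A₁^2 + 3000*A₁^4) := by
        rw [hd₁, hA₁, hb₁] at heq; linear_combination heq
      exact mul_left_cancel₀ (pow_ne_zero 4 hgz) e
    have hA₁0 : A₁ ≠ 0 := fun hc => hA0 (by rw [hA₁, hc, mul_zero])
    have hlt : A₁.natAbs < N := by
      have : A.natAbs = g * A₁.natAbs := by rw [hA₁, Int.natAbs_mul, Int.natAbs_natCast]
      have h1 : 1 ≤ A₁.natAbs := by
        rcases Nat.eq_zero_or_pos A₁.natAbs with h0 | h0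
        · exact absurd (Int.natAbs_eq_zero.mp h0) hA₁0
        · exact h0
      nlinarith [hN]
    exact hA₁0 (IH A₁.natAbs hlt A₁ b₁ d₁ rfl heq₁)
  case pos =>
  have hco : IsCoprime d A := Int.isCoprime_iff_gcd_eq_one.mpr hg1
  have hunit : ∀ p : ℕ, p.Prime → (p:ℤ) ∣ d → (p:ℤ) ∣ A → False := fun p hp h1 h2 =>
    isunit_contra hp (hco.isUnit_of_dvd' h1 h2)
  -- d odd
  have hd : Odd d := by
    by_contra hne
    obtain ⟨k, hk⟩ := Int.not_odd_iff_even.mp hne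
    have hk2 : d = 2 * k := by omega
    have hAo : Odd A := by
      by_contra hAne
      obtain ⟨l, hl⟩ := Int.not_odd_iff_even.mp hAne
      exact hunit 2 Nat.prime_two ⟨k, hk2⟩ ⟨l, by omega⟩
    obtain ⟨l, hl⟩ := hAo
    rw [hk2, hl] at heq
    have h16 := congrArg (Int.cast : ℤ → ZMod 16) heq
    push_cast at h16
    exact K16a _ _ _ h16
  obtain ⟨kd, hkd⟩ := hd
  have hdne : d ≠ 0 := by omega
  -- b odd
  have hb : Odd b := by
    by_contra hne
    obtain ⟨e, he⟩ := Int.not_odd_iff_even.mp hne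
    have he2 : b = 2 * e := by omega
    rw [he2, hkd] at heq
    have h4 := congrArg (Int.cast : ℤ → ZMod 4) heq
    push_cast at h4
    exact K4b _ _ _ h4
  -- 5 ∤ d
  have hp5 : Prime (5:ℤ) := by norm_num
  have h5d : ¬ (5:ℤ) ∣ d := by
    intro h5
    obtain ⟨d₁, hd₁⟩ := h5
    have h5b : (5:ℤ) ∣ b := hp5.dvd_of_dvd_pow (n := 2)
      ⟨125*d₁^4 + 1000*d₁^2*A^2 + 600*A^4, by rw [heq, hd₁]; ring⟩
    obtain ⟨b₁, hb₁⟩ := h5b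
    have h1 : b₁^2 = 25*d₁^4 + 200*d₁^2*A^2 + 120*A^4 := by
      have e : (25:ℤ) * b₁^2 = 25 * (25*d₁^4 + 200*d₁^2*A^2 + 120*A^4) := by
        rw [hd₁, hb₁] at heq; linear_combination heq
      exact mul_left_cancel₀ (by norm_num) e
    have h5b₁ : (5:ℤ) ∣ b₁ := hp5.dvd_of_dvd_pow (n := 2)
      ⟨5*d₁^4 + 40*d₁^2*A^2 + 24*A^4, by rw [h1]; ring⟩
    obtain ⟨b₂, hb₂⟩ := h5b₁
    have h2 : (5:ℤ) ∣ 24 * A^4 := by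
      refine ⟨b₂^2 - d₁^4 - 8*d₁^2*A^2, ?_⟩
      rw [hb₂] at h1
      have e5 : (5:ℤ) * (24*A^4) = 5 * (5 * (b₂^2 - d₁^4 - 8*d₁^2*A^2)) := by linear_combination -h1
      exact mul_left_cancel₀ (by norm_num) e5
    have h5A : (5:ℤ) ∣ A :=
      hp5.dvd_of_dvd_pow (n := 4) ((hp5.dvd_mul.mp h2).resolve_left (by norm_num))
    exact hunit 5 (by norm_num) ⟨d₁, hd₁⟩ h5A
  have hd5' : ((d : ZMod 5)) ≠ 0 := fun hc =>
    h5d ((ZMod.intCast_zmod_eq_zero_iff_dvd d 5).mp hc)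
  -- set up X and b'
  set X : ℤ := d^2 + 100*A^2 with hXdef
  set b' : ℤ := |b| with hb'def
  have hb'sq : b'^2 = b^2 := sq_abs b
  have hb'0 : 0 ≤ b' := abs_nonneg b
  have hX0 : 0 ≤ X := by positivity
  have hA4pos : (0:ℤ) < A^4 := by positivity
  have hXsq : X^2 - b'^2 = 7000*A^4 := by rw [hb'sq, hXdef]; linear_combination -heq
  have hbX : b' < X := by
    have h1 : b'^2 < X^2 := by linarith
    exact lt_of_pow_lt_pow_left₀ 2 hX0 h1
  have hXodd : Odd X := ⟨2*kd^2 + 2*kd + 50*A^2, by rw [hXdef, hkd]; ring⟩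
  have hb'odd : Odd b' := by
    rcases abs_choice b with hc | hc
    · rw [hb'def, hc]; exact hb
    · rw [hb'def, hc]; obtain ⟨c, hcc⟩ := hb; exact ⟨-c-1, by omega⟩
  obtain ⟨m, hm⟩ : ∃ m, X - b' = 2 * m := by
    obtain ⟨a, ha⟩ := hXodd; obtain ⟨c, hc⟩ := hb'odd; exact ⟨a - c, by omega⟩
  obtain ⟨n, hn⟩ : ∃ n, X + b' = 2 * n := by
    obtain ⟨a, ha⟩ := hXodd; obtain ⟨c, hc⟩ := hb'odd; exact ⟨a + c + 1, by omega⟩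
  have hmpos : 0 < m := by omega
  have hnpos : 0 < n := by omega
  have hXsum : X = m + n := by omega
  have hbdiff : b' = n - m := by omega
  have hmn : m * n = 1750 * A^4 := by
    have e : (4:ℤ) * (m * n) = 4 * (1750 * A^4) := by
      have : (2*m) * (2*n) = X^2 - b'^2 := by rw [← hm, ← hn]; ring
      rw [hXsq] at this
      linear_combination this
    exact mul_left_cancel₀ (by norm_num) e
  -- coprimality of m n
  have hgcd : Nat.Coprime m.natAbs n.natAbs := by
    by_contra hne
    obtain ⟨p, hp, hpm, hpn⟩ := Nat.Prime.not_coprime_iff_dvd.mp hne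
    have hpm' : (p:ℤ) ∣ m := Int.dvd_natAbs.mp (Int.natCast_dvd_natCast.mpr hpm)
    have hpn' : (p:ℤ) ∣ n := Int.dvd_natAbs.mp (Int.natCast_dvd_natCast.mpr hpn)
    have hpX : (p:ℤ) ∣ X := hXsum ▸ dvd_add hpm' hpn'
    have hp2 : p ≠ 2 := by
      rintro rfl
      obtain ⟨c, hc⟩ := hXodd
      obtain ⟨e, he⟩ := hpX
      omega
    have hpP : Prime (p:ℤ) := Nat.prime_iff_prime_int.mp hp
    have hpA : (p:ℤ) ∣ A → False := by
      intro hc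
      have hpd : (p:ℤ) ∣ d := hpP.dvd_of_dvd_pow (n := 2)
        (by obtain ⟨a, ha⟩ := hpX; obtain ⟨c', hc'⟩ := hc
            refine ⟨a - 100*c'*A, ?_⟩
            rw [show d^2 = X - 100*(A*A) from by rw [hXdef]; ring, ha]
            nth_rewrite 2 [hc']; ring)
      exact hunit p hp hpd hc
    have hpmn : (p:ℤ) ∣ 1750 * A^4 := hmn ▸ Dvd.dvd.mul_right hpm' n
    rcases hpP.dvd_mul.mp hpmn with hc | hc
    · have hpn1750 : p ∣ 1750 := by exact_mod_cast hc
      have h8 : (1750 : ℕ) = 2 * (5^3 * 7) := by norm_num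
      rcases (Nat.Prime.dvd_mul hp).mp (h8 ▸ hpn1750) with hc2 | hc2
      · exact hp2 ((Nat.prime_dvd_prime_iff_eq hp Nat.prime_two).mp hc2)
      · rcases (Nat.Prime.dvd_mul hp).mp hc2 with hc3 | hc3
        · -- p = 5
          have hp5' : p = 5 := (Nat.prime_dvd_prime_iff_eq hp Nat.prime_five).mp (hp.dvd_of_dvd_pow hc3)
          rw [hp5'] at hpX
          apply h5d
          apply hp5.dvd_of_dvd_pow (n := 2)
          obtain ⟨a, ha⟩ := hpX
          exact ⟨a - 20*A^2, by rw [show d^2 = X - 100*A^2 from by rw [hXdef]; ring, ha]; push_cast; ring⟩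
        · -- p = 7
          have hp7 : p = 7 := (Nat.prime_dvd_prime_iff_eq hp (by norm_num)).mp hc3
          rw [hp7] at hpm' hpn' hpX
          have h49 : (49:ℤ) ∣ 1750 * A^4 := by
            rw [← hmn]; exact mul_dvd_mul hpm' hpn'
          obtain ⟨c49, hc49⟩ := h49
          have h7A4 : (7:ℤ) ∣ A^4 := by
            have e7 : (7:ℤ) * (250 * A^4) = 7 * (7 * c49) := by linear_combination hc49
            have : (250:ℤ) * A^4 = 7 * c49 := mul_left_cancel₀ (by norm_num) e7
            have h7' : (7:ℤ) ∣ 250 * A^4 := ⟨c49, this⟩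
            have hp7Z : Prime (7:ℤ) := by norm_num
            exact (hp7Z.dvd_mul.mp h7').resolve_left (by norm_num)
          have h7A : (7:ℤ) ∣ A := (by norm_num : Prime (7:ℤ)).dvd_of_dvd_pow h7A4
          apply hpA; rw [hp7]; exact_mod_cast h7A
    · exact hpA (hpP.dvd_of_dvd_pow hc)
  have hmnN : m.natAbs * n.natAbs = 1750 * A.natAbs^4 := by
    have := congrArg Int.natAbs hmn
    rwa [Int.natAbs_mul, Int.natAbs_mul, Int.natAbs_pow] at this
  obtain ⟨u', v', hDD, hmE, hnE, hst⟩ := split4 (by norm_num) hgcd hmnN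
  set D1 := Nat.gcd 1750 m.natAbs with hD1def
  set D2 := Nat.gcd 1750 n.natAbs with hD2def
  have hcopD : ∀ {x y : ℤ}, 0 < x → 0 < y →
      Nat.Coprime x.natAbs y.natAbs → x.natAbs * y.natAbs = 1750 * A.natAbs^4 →
      5 ∣ Nat.gcd 1750 x.natAbs → 125 ∣ Nat.gcd 1750 x.natAbs := by
    intro x y hx hy hco' hxy hqd
    have hqm : 5 ∣ x.natAbs := hqd.trans (Nat.gcd_dvd_right _ _)
    have hqn : ¬ 5 ∣ y.natAbs := by
      intro hc
      have := Nat.dvd_gcd hqm hc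
      rw [hco'] at this
      exact Nat.Prime.one_lt Nat.prime_five |>.ne' (Nat.eq_one_of_dvd_one this)
    have hdvd : 5^3 ∣ x.natAbs * y.natAbs := by
      rw [hxy]; exact Dvd.dvd.trans (by norm_num) ⟨A.natAbs^4, rfl⟩
    have hqkm : 5^3 ∣ x.natAbs :=
      ((cop_pow_right' Nat.prime_five hqn 3).symm).dvd_of_dvd_mul_right hdvd
    have := Nat.dvd_gcd (show 5^3 ∣ 1750 by norm_num) hqkm
    simpa using this
  have hD1pin := pin1750 (Nat.gcd_dvd_left _ _ : D1 ∣ 1750)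
    (fun h5 => hcopD hmpos hnpos hgcd hmnN h5)
  -- ℤ versions
  have hmabs : (m.natAbs : ℤ) = m := Int.natAbs_of_nonneg hmpos.le
  have hnabs : (n.natAbs : ℤ) = n := Int.natAbs_of_nonneg hnpos.le
  have hmZ : m = (D1 : ℤ) * (u' : ℤ)^4 := by rw [← hmabs, hmE]; push_cast; ring
  have hnZ : n = (D2 : ℤ) * (v' : ℤ)^4 := by rw [← hnabs, hnE]; push_cast; ring
  have hA2 : A^2 = (u' : ℤ)^2 * (v' : ℤ)^2 := by
    have h1 : ((u' * v' : ℕ) : ℤ)^2 = ((A.natAbs : ℕ) : ℤ)^2 := by rw [hst]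
    have h2 : ((A.natAbs : ℕ) : ℤ)^2 = A^2 := by push_cast [Int.natAbs_sq]; simp [sq_abs]
    push_cast at h1
    rw [← h2]; push_cast; linear_combination -h1
  have hu'pos : 0 < u' := by
    rcases Nat.eq_zero_or_pos u' with h0 | h0
    · exfalso
      have : m.natAbs = 0 := by rw [hmE, h0]; ring
      rw [this] at hmabs; simp at hmabs; omega
    · exact h0
  have hv'pos : 0 < v' := by
    rcases Nat.eq_zero_or_pos v' with h0 | h0
    · exfalso
      have : n.natAbs = 0 := by rw [hnE, h0]; ring
      rw [this] at hnabs; simp at hnabs; omega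
    · exact h0
  have hX2 : d^2 = m + n - 100*A^2 := by rw [← hXsum, hXdef]; ring
  have hEE : D1 * D2 = 1750 := hDD
  -- coprimality of u' v'
  have hcopuv : Nat.Coprime u' v' := by
    have h4 : Nat.Coprime (u'^4) (v'^4) := by
      apply Nat.Coprime.coprime_dvd_left (show u'^4 ∣ m.natAbs from hmE ▸ ⟨D1, mul_comm _ _⟩)
      exact Nat.Coprime.coprime_dvd_right (show v'^4 ∣ n.natAbs from hnE ▸ ⟨D2, mul_comm _ _⟩) hgcd
    exact (Nat.coprime_pow_left_iff (by norm_num : 0 < 4) u' v').mp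
      ((Nat.coprime_pow_right_iff (by norm_num : 0 < 4) (u'^4) v').mp h4)
  have hcopZ : IsCoprime ((u':ℤ)) ((v':ℤ)) := by
    rw [Int.isCoprime_iff_gcd_eq_one, Int.gcd_natCast_natCast]
    exact hcopuv
  have hNval : u' * v' = A.natAbs := hst
  have hodduv : Odd ((u':ℤ)) ∨ Odd ((v':ℤ)) := by
    rcases Int.even_or_odd ((u':ℤ)) with he | ho
    · right
      rcases Int.even_or_odd ((v':ℤ)) with he2 | ho2
      · exfalso
        obtain ⟨a, ha⟩ := he; obtain ⟨c, hc⟩ := he2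
        have h2u : (2:ℕ) ∣ u' := by
          have : (2:ℤ) ∣ (u':ℤ) := ⟨a, by omega⟩
          exact_mod_cast this
        have h2v : (2:ℕ) ∣ v' := by
          have : (2:ℤ) ∣ (v':ℤ) := ⟨c, by omega⟩
          exact_mod_cast this
        have := Nat.dvd_gcd h2u h2v
        rw [hcopuv] at this
        omega
      · exact ho2
    · left; exact ho
  -- the eight cases
  rcases hD1pin with hD | hD | hD | hD | hD | hD | hD | hD <;> rw [← hD1def] at hD <;> rw [hD] at hEE
  · -- D1 = 1, D2 = 1750 : descent via stage2
    have hD2v : D2 = 1750 := by omega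
    rw [hD] at hmZ; rw [hD2v] at hnZ; push_cast at hmZ hnZ
    have heq2 : d^2 = (u':ℤ)^4 - 100*(u':ℤ)^2*(v':ℤ)^2 + 1750*(v':ℤ)^4 := by
      linear_combination hX2 + hmZ + hnZ - 100*hA2
    obtain ⟨b₂, d₂, t, ht0, htb, heqt⟩ := stage2 hcopZ (Int.natCast_ne_zero.mpr (by omega)) heq2
    have htlt : t.natAbs < N := by
      rw [Int.natAbs_natCast] at htb
      have h1 : 1 ≤ t.natAbs := by
        rcases Nat.eq_zero_or_pos t.natAbs with h0 | h0
        · exact absurd (Int.natAbs_eq_zero.mp h0) ht0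
        · exact h0
      have h2 : v' ≤ u' * v' := Nat.le_mul_of_pos_left v' hu'pos
      have h3 : u' * v' = N := by rw [hNval, hN]
      omega
    exact ht0 (IH t.natAbs htlt t b₂ d₂ rfl heqt)
  · -- D1 = 2, D2 = 875 : mod 5
    have hD2v : D2 = 875 := by omega
    rw [hD] at hmZ; rw [hD2v] at hnZ; push_cast at hmZ hnZ
    have heq2 : d^2 = 2*(u':ℤ)^4 - 100*(u':ℤ)^2*(v':ℤ)^2 + 875*(v':ℤ)^4 := by
      linear_combination hX2 + hmZ + hnZ - 100*hA2
    have h5 := congrArg (Int.cast : ℤ → ZMod 5) heq2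
    push_cast at h5
    exact K5_2 ((d:ZMod 5)) ((u':ZMod 5)) ((v':ZMod 5)) hd5' (by linear_combination h5)
  · -- D1 = 7, D2 = 250 : mod 8
    have hD2v : D2 = 250 := by omega
    rw [hD] at hmZ; rw [hD2v] at hnZ; push_cast at hmZ hnZ
    have heq2 : d^2 = 7*(u':ℤ)^4 - 100*(u':ℤ)^2*(v':ℤ)^2 + 250*(v':ℤ)^4 := by
      linear_combination hX2 + hmZ + hnZ - 100*hA2
    rcases hodduv with ⟨k, hk⟩ | ⟨k, hk⟩
    · rw [hk] at heq2
      have h8 := congrArg (Int.cast : ℤ → ZMod 8) heq2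
      push_cast at h8
      exact K8_7 _ _ _ h8
    · rw [hk] at heq2
      have h8 := congrArg (Int.cast : ℤ → ZMod 8) heq2
      push_cast at h8
      exact K8_250 ((d:ZMod 8)) ((k:ZMod 8)) ((u':ZMod 8)) (by linear_combination h8)
  · -- D1 = 14, D2 = 125
    have hD2v : D2 = 125 := by omega
    rw [hD] at hmZ; rw [hD2v] at hnZ; push_cast at hmZ hnZ
    have heq2 : d^2 = 14*(u':ℤ)^4 - 100*(u':ℤ)^2*(v':ℤ)^2 + 125*(v':ℤ)^4 := by
      linear_combination hX2 + hmZ + hnZ - 100*hA2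
    rcases hodduv with ⟨k, hk⟩ | ⟨k, hk⟩
    · rw [hk] at heq2
      have h8 := congrArg (Int.cast : ℤ → ZMod 8) heq2
      push_cast at h8
      exact K8_14 _ _ _ h8
    · rw [hk] at heq2
      have h8 := congrArg (Int.cast : ℤ → ZMod 8) heq2
      push_cast at h8
      exact K8_125 ((d:ZMod 8)) ((k:ZMod 8)) ((u':ZMod 8)) (by linear_combination h8)
  · -- D1 = 125, D2 = 14
    have hD2v : D2 = 14 := by omega
    rw [hD] at hmZ; rw [hD2v] at hnZ; push_cast at hmZ hnZ
    have heq2 : d^2 = 125*(u':ℤ)^4 - 100*(u':ℤ)^2*(v':ℤ)^2 + 14*(v':ℤ)^4 := by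
      linear_combination hX2 + hmZ + hnZ - 100*hA2
    rcases hodduv with ⟨k, hk⟩ | ⟨k, hk⟩
    · rw [hk] at heq2
      have h8 := congrArg (Int.cast : ℤ → ZMod 8) heq2
      push_cast at h8
      exact K8_125 _ _ _ h8
    · rw [hk] at heq2
      have h8 := congrArg (Int.cast : ℤ → ZMod 8) heq2
      push_cast at h8
      exact K8_14 ((d:ZMod 8)) ((k:ZMod 8)) ((u':ZMod 8)) (by linear_combination h8)
  · -- D1 = 250, D2 = 7
    have hD2v : D2 = 7 := by omega
    rw [hD] at hmZ; rw [hD2v] at hnZ; push_cast at hmZ hnZ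
    have heq2 : d^2 = 250*(u':ℤ)^4 - 100*(u':ℤ)^2*(v':ℤ)^2 + 7*(v':ℤ)^4 := by
      linear_combination hX2 + hmZ + hnZ - 100*hA2
    rcases hodduv with ⟨k, hk⟩ | ⟨k, hk⟩
    · rw [hk] at heq2
      have h8 := congrArg (Int.cast : ℤ → ZMod 8) heq2
      push_cast at h8
      exact K8_250 _ _ _ h8
    · rw [hk] at heq2
      have h8 := congrArg (Int.cast : ℤ → ZMod 8) heq2
      push_cast at h8
      exact K8_7 ((d:ZMod 8)) ((k:ZMod 8)) ((u':ZMod 8)) (by linear_combination h8)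
  · -- D1 = 875, D2 = 2 : mod 5
    have hD2v : D2 = 2 := by omega
    rw [hD] at hmZ; rw [hD2v] at hnZ; push_cast at hmZ hnZ
    have heq2 : d^2 = 875*(u':ℤ)^4 - 100*(u':ℤ)^2*(v':ℤ)^2 + 2*(v':ℤ)^4 := by
      linear_combination hX2 + hmZ + hnZ - 100*hA2
    have h5 := congrArg (Int.cast : ℤ → ZMod 5) heq2
    push_cast at h5
    exact K5_2 ((d:ZMod 5)) ((v':ZMod 5)) ((u':ZMod 5)) hd5' (by linear_combination h5)
  · -- D1 = 1750, D2 = 1 : descent via stage2 (swapped)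
    have hD2v : D2 = 1 := by omega
    rw [hD] at hmZ; rw [hD2v] at hnZ; push_cast at hmZ hnZ
    have heq2 : d^2 = (v':ℤ)^4 - 100*(v':ℤ)^2*(u':ℤ)^2 + 1750*(u':ℤ)^4 := by
      linear_combination hX2 + hmZ + hnZ - 100*hA2
    obtain ⟨b₂, d₂, t, ht0, htb, heqt⟩ := stage2 hcopZ.symm (Int.natCast_ne_zero.mpr (by omega)) heq2
    have htlt : t.natAbs < N := by
      rw [Int.natAbs_natCast] at htb
      have h1 : 1 ≤ t.natAbs := by
        rcases Nat.eq_zero_or_pos t.natAbs with h0 | h0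
        · exact absurd (Int.natAbs_eq_zero.mp h0) ht0
        · exact h0
      have h2 : u' ≤ u' * v' := Nat.le_mul_of_pos_right u' hv'pos
      have h3 : u' * v' = N := by rw [hNval, hN]
      omega
    exact ht0 (IH t.natAbs htlt t b₂ d₂ rfl heqt)

theorem stmt_9 (a b d : ℤ)
    (heq : b ^ 2 = d ^ 4 + 200 * d ^ 2 * a ^ 4 + 3000 * a ^ 8) :
    a = 0 := by
  have h := master (a^2).natAbs (a^2) b d rfl (by linear_combination heq)
  exact pow_eq_zero_iff (by norm_num) |>.mp h
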